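/- Let n ≥ 18 and D = {i : 1 ≤ i ≤ 2^{n+1} − 3, i odd}. Let U be an irreducible solution of length ℓ and weight w for D whose density lies in [1/n, 1/(n−1)], i.e. (n−1)·w ≤ ℓ ≤ n·w. Then the support φ_U has exactly w jumps, i.e. there are exactly w values k ∈ ℤ/ℓℤ with φ_U(k+1) < 2φ_U(k). -/

import Mathlib

/-- The binary weight `s₂(m)`: the sum of the base-2 digits of `m`. -/
def s2 (m : ℕ) : ℕ := (Nat.digits 2 m).sum

/-- The shift map on `{0, …, 2^ℓ - 1}`: it fixes `2^ℓ - 1` and sends any other `i`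
to the remainder of `2·i` modulo `2^ℓ - 1`. -/
def shift2 (ℓ i : ℕ) : ℕ := if i = 2 ^ ℓ - 1 then i else (2 * i) % (2 ^ ℓ - 1)

/-- `U : ℕ → ℕ` (supported on `D`) is a solution of length `ℓ` for `D`:
`0 ≤ u_d ≤ 2^ℓ - 1` and `∑ d·u_d` is a positive multiple of `2^ℓ - 1`. -/
structure IsSolution (D : Finset ℕ) (ℓ : ℕ) (U : ℕ → ℕ) : Prop where
  len_pos : 1 ≤ ℓ
  bounded : ∀ d, U d ≤ 2 ^ ℓ - 1
  supp_sub : ∀ d, d ∉ D → U d = 0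
  dvd : (2 ^ ℓ - 1) ∣ ∑ d ∈ D, d * U d
  pos : 0 < ∑ d ∈ D, d * U d

/-- The weight `s(U) = ∑_{d ∈ D} s₂(u_d)` of a solution. -/
def weight (D : Finset ℕ) (U : ℕ → ℕ) : ℕ := ∑ d ∈ D, s2 (U d)

/-- The support map `φ_U(k) = (∑_{d ∈ D} d·δ^k(u_d)) / (2^ℓ - 1)` of a solution,
viewed as an `ℓ`-periodic function on `ℕ`. -/
def supportMap (D : Finset ℕ) (ℓ : ℕ) (U : ℕ → ℕ) (k : ℕ) : ℕ :=
  (∑ d ∈ D, d * (shift2 ℓ)^[k] (U d)) / (2 ^ ℓ - 1)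

/-- A solution is irreducible when its support map is injective on `ℤ/ℓℤ`,
i.e. injective on `{0, …, ℓ-1}`. -/
def IrreducibleSol (D : Finset ℕ) (ℓ : ℕ) (U : ℕ → ℕ) : Prop :=
  Set.InjOn (supportMap D ℓ U) ↑(Finset.range ℓ)

/-- `U` is a shift of `V` (coordinatewise iterate of the shift map). -/
def IsShiftOf (ℓ : ℕ) (U V : ℕ → ℕ) : Prop :=
  ∃ k, ∀ d, U d = (shift2 ℓ)^[k] (V d)

/-- The set of odd integers `1 ≤ i ≤ d`. -/
def oddUpTo (d : ℕ) : Finset ℕ := (Finset.range (d + 1)).filter (fun i => i % 2 = 1)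

/-- `D = {i : 1 ≤ i ≤ 2^{n+1} - 3, i odd}`. -/
def oddD (n : ℕ) : Finset ℕ := oddUpTo (2 ^ (n + 1) - 3)

/-- The solution with `u_a = 1` and all other coordinates `0`. -/
def sol1 (a : ℕ) : ℕ → ℕ := fun d => if d = a then 1 else 0

/-- The solution with `u_a = x`, `u_b = y` and all other coordinates `0`. -/
def sol2 (a x b y : ℕ) : ℕ → ℕ := fun d => if d = a then x else if d = b then y else 0

/-- The solution with `u_a = x`, `u_b = y`, `u_c = z` and all other coordinates `0`. -/
def sol3 (a x b y c z : ℕ) : ℕ → ℕ :=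
  fun d => if d = a then x else if d = b then y else if d = c then z else 0


namespace SupportJumps



lemma shift2_closed (m u : ℕ) (hu : u < 2 ^ (m + 1)) :
    shift2 (m + 1) u = 2 * (u % 2 ^ m) + u / 2 ^ m := by
  have hp : 0 < 2 ^ m := Nat.two_pow_pos m
  have h2 : (2:ℕ) ^ (m+1) = 2 * 2 ^ m := by ring
  unfold shift2
  rcases Nat.lt_or_ge u (2 ^ m) with h | h
  · have hne : u ≠ 2 ^ (m+1) - 1 := by omega
    rw [if_neg hne]
    have hmod : u % 2 ^ m = u := Nat.mod_eq_of_lt h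
    have hdiv : u / 2 ^ m = 0 := Nat.div_eq_of_lt h
    rw [hmod, hdiv, Nat.mod_eq_of_lt (by omega)]
    omega
  · have hdiv : u / 2 ^ m = 1 := Nat.div_eq_of_lt_le (by omega) (by omega)
    have hmod : u % 2 ^ m = u - 2 ^ m := by
      rw [Nat.mod_eq_sub_mod h, Nat.mod_eq_of_lt (by omega)]
    by_cases he : u = 2 ^ (m+1) - 1
    · rw [if_pos he, hmod, hdiv]; omega
    · rw [if_neg he, hmod, hdiv]
      have h1 : 2 ^ (m+1) - 1 ≤ 2 * u := by omega
      rw [Nat.mod_eq_sub_mod h1, Nat.mod_eq_of_lt (by omega)]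
      omega

lemma shift2_lt (m u : ℕ) (hu : u < 2 ^ (m + 1)) : shift2 (m + 1) u < 2 ^ (m + 1) := by
  rw [shift2_closed m u hu]
  have h1 : u % 2 ^ m < 2 ^ m := Nat.mod_lt _ (Nat.two_pow_pos m)
  have h2 : u / 2 ^ m < 2 := by
    rw [Nat.div_lt_iff_lt_mul (Nat.two_pow_pos m)]; omega
  have h3 : (2:ℕ) ^ (m+1) = 2 * 2 ^ m := by ring
  omega

lemma shift2_iter {ℓ : ℕ} : ∀ (k j u : ℕ), k + j = ℓ → u < 2 ^ ℓ →
    (shift2 ℓ)^[k] u = 2 ^ k * (u % 2 ^ j) + u / 2 ^ j := by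
  intro k
  induction k with
  | zero =>
    intro j u hkj hu
    subst hkj
    simp only [Function.iterate_zero, id_eq, pow_zero, one_mul]
    simp only [Nat.zero_add] at hu
    rw [Nat.mod_eq_of_lt hu, Nat.div_eq_of_lt hu]; omega
  | succ k ih =>
    intro j u hkj hu
    have hℓ : ℓ = (k + j) + 1 := by omega
    rw [Function.iterate_succ_apply', ih (j+1) u (by omega) hu]
    set M := u % 2 ^ (j+1) with hM
    set H := u / 2 ^ (j+1) with hH
    have hMlt : M < 2 ^ (j+1) := Nat.mod_lt _ (Nat.two_pow_pos _)
    have hHlt : H < 2 ^ k := by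
      rw [hH, Nat.div_lt_iff_lt_mul (Nat.two_pow_pos _)]
      calc u < 2 ^ ℓ := hu
        _ = 2 ^ k * 2 ^ (j+1) := by rw [hℓ]; ring
    set b := M / 2 ^ j with hb
    set r := M % 2 ^ j with hr
    have hrlt : r < 2 ^ j := Nat.mod_lt _ (Nat.two_pow_pos _)
    have h2j1 : (2:ℕ) ^ (j+1) = 2 ^ j * 2 := by ring
    have hble : b < 2 := by
      rw [hb, Nat.div_lt_iff_lt_mul (Nat.two_pow_pos _)]
      omega
    have hMsplit : 2 ^ j * b + r = M := Nat.div_add_mod M (2 ^ j)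
    have hv : 2 ^ k * M + H = 2 ^ (k+j) * b + (2 ^ k * r + H) := by
      rw [← hMsplit, pow_add]; ring
    have hxlt : 2 ^ k * r + H < 2 ^ (k+j) := by
      have e1 : (2:ℕ) ^ (k+j) = 2 ^ k * 2 ^ j := pow_add 2 k j
      have e2 : 2 ^ k * r + 2 ^ k ≤ 2 ^ k * 2 ^ j := by
        calc 2 ^ k * r + 2 ^ k = 2 ^ k * (r + 1) := by ring
          _ ≤ 2 ^ k * 2 ^ j := Nat.mul_le_mul_left _ (by omega)
      omega
    have hbb : 2 ^ (k+j) * b ≤ 2 ^ (k+j) := by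
      calc 2 ^ (k+j) * b ≤ 2 ^ (k+j) * 1 := Nat.mul_le_mul_left _ (by omega)
        _ = 2 ^ (k+j) := by ring
    have hvlt : 2 ^ k * M + H < 2 ^ ((k+j)+1) := by
      have : (2:ℕ) ^ ((k+j)+1) = 2 ^ (k+j) * 2 := by ring
      omega
    rw [hℓ, shift2_closed (k+j) _ hvlt, hv]
    have hvm : (2 ^ (k+j) * b + (2 ^ k * r + H)) % 2 ^ (k+j) = 2 ^ k * r + H := by
      rw [show 2 ^ (k+j) * b + (2 ^ k * r + H) = (2 ^ k * r + H) + 2 ^ (k+j) * b from by ring,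
        Nat.add_mul_mod_self_left, Nat.mod_eq_of_lt hxlt]
    have hvd : (2 ^ (k+j) * b + (2 ^ k * r + H)) / 2 ^ (k+j) = b := by
      rw [show 2 ^ (k+j) * b + (2 ^ k * r + H) = (2 ^ k * r + H) + 2 ^ (k+j) * b from by ring,
        Nat.add_mul_div_left _ _ (Nat.two_pow_pos _),
        Nat.div_eq_of_lt hxlt]
      omega
    rw [hvm, hvd]
    have hru : r = u % 2 ^ j := by
      rw [hr, hM, Nat.mod_mod_of_dvd u (pow_dvd_pow 2 (by omega))]
    have hdu : u / 2 ^ j = 2 * H + b := by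
      have husplit : 2 ^ j * (2 * H) + M = u := by
        have e1 : 2 ^ j * (2 * H) = 2 ^ (j+1) * H := by ring
        rw [e1, hH, hM, Nat.div_add_mod]
      rw [← husplit, Nat.mul_add_div (Nat.two_pow_pos _)]
    rw [← hru, hdu]
    have : 2 ^ (k+1) * r = 2 * (2 ^ k * r) := by ring
    omega


lemma shift2_ltg {ℓ : ℕ} (hℓ : 1 ≤ ℓ) {u : ℕ} (hu : u < 2 ^ ℓ) : shift2 ℓ u < 2 ^ ℓ := by
  obtain ⟨m, rfl⟩ : ∃ m, ℓ = m + 1 := ⟨ℓ - 1, by omega⟩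
  exact shift2_lt m u hu

lemma shift2_iter_lt {ℓ : ℕ} (hℓ : 1 ≤ ℓ) {u : ℕ} (hu : u < 2 ^ ℓ) (k : ℕ) :
    (shift2 ℓ)^[k] u < 2 ^ ℓ := by
  induction k with
  | zero => exact hu
  | succ k ih => rw [Function.iterate_succ_apply']; exact shift2_ltg hℓ ih

lemma shift2_iter_id {ℓ : ℕ} {u : ℕ} (hu : u < 2 ^ ℓ) : (shift2 ℓ)^[ℓ] u = u := by
  rw [shift2_iter ℓ 0 u (by omega) hu]
  simp [Nat.mod_one]

lemma shift2_top {ℓ k u : ℕ} (hk : k < ℓ) (hu : u < 2 ^ ℓ) :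
    (shift2 ℓ)^[k] u / 2 ^ (ℓ - 1) = u / 2 ^ (ℓ - 1 - k) % 2 := by
  obtain ⟨i, hi⟩ : ∃ i, ℓ = k + (i + 1) := ⟨ℓ - k - 1, by omega⟩
  have hi1 : ℓ - 1 = k + i := by omega
  have hi2 : ℓ - 1 - k = i := by omega
  rw [shift2_iter k (i+1) u (by omega) hu, hi2, hi1]
  set M := u % 2 ^ (i+1) with hM
  set H := u / 2 ^ (i+1) with hH
  have hMlt : M < 2 ^ (i+1) := Nat.mod_lt _ (Nat.two_pow_pos _)
  have hHlt : H < 2 ^ k := by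
    rw [hH, Nat.div_lt_iff_lt_mul (Nat.two_pow_pos _)]
    calc u < 2 ^ ℓ := hu
      _ = 2 ^ k * 2 ^ (i+1) := by rw [hi]; ring
  have e1 : (2 ^ k * M + H) / 2 ^ (k+i) = M / 2 ^ i := by
    rw [pow_add, ← Nat.div_div_eq_div_mul,
      Nat.mul_add_div (Nat.two_pow_pos _), Nat.div_eq_of_lt hHlt,
      Nat.add_zero]
  rw [e1]
  -- M / 2 ^ i = u / 2 ^ i % 2
  have husplit : 2 ^ i * (2 * H) + M = u := by
    have e2 : 2 ^ i * (2 * H) = 2 ^ (i+1) * H := by ring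
    rw [e2, hH, hM, Nat.div_add_mod]
  have e3 : u / 2 ^ i = 2 * H + M / 2 ^ i := by
    rw [← husplit, Nat.mul_add_div (Nat.two_pow_pos _)]
  have e4 : M / 2 ^ i < 2 := by
    rw [Nat.div_lt_iff_lt_mul (Nat.two_pow_pos _)]
    have : (2:ℕ) ^ (i+1) = 2 ^ i * 2 := by ring
    omega
  rw [e3, Nat.mul_add_mod, Nat.mod_eq_of_lt e4]

lemma shift2_rec {ℓ : ℕ} (hℓ : 1 ≤ ℓ) {u : ℕ} (hu : u < 2 ^ ℓ) :
    shift2 ℓ u + (2 ^ ℓ - 1) * (u / 2 ^ (ℓ - 1)) = 2 * u := by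
  obtain ⟨m, rfl⟩ : ∃ m, ℓ = m + 1 := ⟨ℓ - 1, by omega⟩
  rw [shift2_closed m u hu]
  simp only [Nat.add_sub_cancel]
  have e0 : 2 ^ m * (u / 2 ^ m) + u % 2 ^ m = u := Nat.div_add_mod u (2 ^ m)
  have e1 : u / 2 ^ m < 2 := by
    rw [Nat.div_lt_iff_lt_mul (Nat.two_pow_pos _)]
    have : (2:ℕ) ^ (m+1) = 2 ^ m * 2 := by ring
    omega
  have e2 : (2:ℕ) ^ (m+1) = 2 ^ m * 2 := by ring
  have hp : 0 < (2:ℕ) ^ m := Nat.two_pow_pos _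
  interval_cases h : u / 2 ^ m <;> omega

lemma shift2_pos {ℓ : ℕ} (hℓ : 1 ≤ ℓ) {u : ℕ} (hu : u < 2 ^ ℓ) (hpos : 0 < u) :
    0 < shift2 ℓ u := by
  obtain ⟨m, rfl⟩ : ∃ m, ℓ = m + 1 := ⟨ℓ - 1, by omega⟩
  rw [shift2_closed m u hu]
  have e0 : 2 ^ m * (u / 2 ^ m) + u % 2 ^ m = u := Nat.div_add_mod u (2 ^ m)
  have hp : 0 < (2:ℕ) ^ m := Nat.two_pow_pos _
  rcases Nat.eq_zero_or_pos (u % 2 ^ m) with h | h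
  · rcases Nat.eq_zero_or_pos (u / 2 ^ m) with h2 | h2
    · rw [h, h2] at e0; simp at e0; omega
    · exact Nat.add_pos_right _ h2
  · exact Nat.add_pos_left (Nat.mul_pos (by norm_num) h) _

lemma shift2_iter_pos {ℓ : ℕ} (hℓ : 1 ≤ ℓ) {u : ℕ} (hu : u < 2 ^ ℓ) (hpos : 0 < u) (k : ℕ) :
    0 < (shift2 ℓ)^[k] u := by
  induction k with
  | zero => exact hpos
  | succ k ih =>
    rw [Function.iterate_succ_apply']
    exact shift2_pos hℓ (shift2_iter_lt hℓ hu k) ih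

lemma sum_bits : ∀ (ℓ u : ℕ), u < 2 ^ ℓ → ∑ i ∈ Finset.range ℓ, (u / 2 ^ i % 2) = s2 u := by
  intro ℓ
  induction ℓ with
  | zero =>
    intro u hu
    have : u = 0 := by omega
    subst this
    simp [s2]
  | succ ℓ ih =>
    intro u hu
    rw [Finset.sum_range_succ']
    have e1 : ∀ i, u / 2 ^ (i+1) % 2 = (u / 2) / 2 ^ i % 2 := by
      intro i
      rw [Nat.div_div_eq_div_mul]
      congr 2
      ring
    have e2 : (∑ i ∈ Finset.range ℓ, u / 2 ^ (i+1) % 2) = s2 (u / 2) := by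
      rw [Finset.sum_congr rfl (fun i _ => e1 i)]
      apply ih
      rw [Nat.div_lt_iff_lt_mul (by norm_num)]
      have : (2:ℕ) ^ (ℓ+1) = 2 ^ ℓ * 2 := by ring
      omega
    rw [e2]
    simp only [pow_zero, Nat.div_one]
    rcases Nat.eq_zero_or_pos u with h0 | h0
    · subst h0; simp [s2]
    · unfold s2
      rw [Nat.digits_def' (by norm_num : 1 < 2) h0]
      simp [List.sum_cons]
      omega
lemma card_le_max {A : Finset ℕ} (hA : A.Nonempty) (h1 : ∀ a ∈ A, 1 ≤ a) :
    A.card ≤ A.max' hA := by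
  have hsub : A ⊆ Finset.Icc 1 (A.max' hA) := by
    intro a ha
    rw [Finset.mem_Icc]
    exact ⟨h1 a ha, Finset.le_max' A a ha⟩
  calc A.card ≤ (Finset.Icc 1 (A.max' hA)).card := Finset.card_le_card hsub
    _ = A.max' hA := by rw [Nat.card_Icc]; omega

lemma prod_add_le (C : ℕ) : ∀ (c : ℕ) (A : Finset ℕ), A.card = c → (∀ a ∈ A, 1 ≤ a) →
    (∏ a ∈ A, (a + C)) * (Nat.factorial c) ≤
      (∏ a ∈ A, a) * ∏ i ∈ Finset.range c, (C + i + 1) := by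
  intro c
  induction c with
  | zero =>
    intro A hc h1
    rw [Finset.card_eq_zero] at hc
    subst hc
    simp
  | succ c ih =>
    intro A hc h1
    have hA : A.Nonempty := by
      rw [← Finset.card_pos, hc]; omega
    set m := A.max' hA with hm
    have hmem : m ∈ A := A.max'_mem hA
    have hmax : c + 1 ≤ m := by rw [← hc]; exact card_le_max hA h1
    set A' := A.erase m with hA'
    have hc' : A'.card = c := by rw [hA', Finset.card_erase_of_mem hmem, hc]; omega
    have h1' : ∀ a ∈ A', 1 ≤ a := fun a ha => h1 a (Finset.mem_of_mem_erase ha)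
    have ihA := ih A' hc' h1'
    have ep1 : ∏ a ∈ A, (a + C) = (m + C) * ∏ a ∈ A', (a + C) :=
      (Finset.mul_prod_erase A _ hmem).symm
    have ep2 : ∏ a ∈ A, a = m * ∏ a ∈ A', a :=
      (Finset.mul_prod_erase A _ hmem).symm
    have ep3 : ∏ i ∈ Finset.range (c+1), (C + i + 1) =
        (∏ i ∈ Finset.range c, (C + i + 1)) * (C + c + 1) := Finset.prod_range_succ _ _
    have key : (m + C) * (c + 1) ≤ m * (C + c + 1) := by nlinarith
    calc (∏ a ∈ A, (a + C)) * (Nat.factorial (c+1))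
        = ((m + C) * (c + 1)) * ((∏ a ∈ A', (a + C)) * Nat.factorial c) := by
          rw [ep1, Nat.factorial_succ]; ring
      _ ≤ ((m + C) * (c + 1)) * ((∏ a ∈ A', a) * ∏ i ∈ Finset.range c, (C + i + 1)) :=
          Nat.mul_le_mul_left _ ihA
      _ ≤ (m * (C + c + 1)) * ((∏ a ∈ A', a) * ∏ i ∈ Finset.range c, (C + i + 1)) :=
          Nat.mul_le_mul_right _ key
      _ = (∏ a ∈ A, a) * ∏ i ∈ Finset.range (c+1), (C + i + 1) := by
          rw [ep2, ep3]; ring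

lemma sum_distinct_ge : ∀ (c : ℕ) (A : Finset ℕ), A.card = c → (∀ a ∈ A, 1 ≤ a) →
    c * (c + 1) ≤ 2 * ∑ a ∈ A, a := by
  intro c
  induction c with
  | zero => intro A hc h1; simp
  | succ c ih =>
    intro A hc h1
    have hA : A.Nonempty := by rw [← Finset.card_pos, hc]; omega
    set m := A.max' hA with hm
    have hmem : m ∈ A := A.max'_mem hA
    have hmax : c + 1 ≤ m := by rw [← hc]; exact card_le_max hA h1
    set A' := A.erase m with hA'
    have hc' : A'.card = c := by rw [hA', Finset.card_erase_of_mem hmem, hc]; omega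
    have h1' : ∀ a ∈ A', 1 ≤ a := fun a ha => h1 a (Finset.mem_of_mem_erase ha)
    have ihA := ih A' hc' h1'
    have es : ∑ a ∈ A, a = m + ∑ a ∈ A', a := (Finset.add_sum_erase A _ hmem).symm
    rw [es]
    nlinarith

lemma eight_pow_le : ∀ j : ℕ, 8 ^ j ≤ 512 * Nat.factorial j := by
  intro j
  induction j with
  | zero => norm_num
  | succ j ih =>
    by_cases h : 7 ≤ j
    · calc (8:ℕ) ^ (j+1) = 8 * 8 ^ j := by ring
        _ ≤ 8 * (512 * Nat.factorial j) := Nat.mul_le_mul_left _ ih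
        _ ≤ (j + 1) * (512 * Nat.factorial j) := Nat.mul_le_mul_right _ (by omega)
        _ = 512 * Nat.factorial (j+1) := by rw [Nat.factorial_succ]; ring
    · interval_cases j <;> simp [Nat.factorial]

end SupportJumps

open SupportJumps in
/-- For `n ≥ 18` and `D = {i : 1 ≤ i ≤ 2^{n+1} − 3, i odd}`, any irreducible solution
of length `ℓ` and weight `w` with density in `[1/n, 1/(n−1)]` has a support with
exactly `w` jumps, i.e. there are exactly `w` values `k ∈ ℤ/ℓℤ` with
`φ_U(k+1) < 2·φ_U(k)`. -/
theorem support_has_weight_jumps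
    (n : ℕ) (hn : 18 ≤ n) (ℓ w : ℕ) (U : ℕ → ℕ)
    (hsol : IsSolution (oddD n) ℓ U)
    (hirr : IrreducibleSol (oddD n) ℓ U)
    (hw : weight (oddD n) U = w)
    (hlow : (n - 1) * w ≤ ℓ) (hhigh : ℓ ≤ n * w) :
    ((Finset.range ℓ).filter
        (fun k => supportMap (oddD n) ℓ U (k + 1) < 2 * supportMap (oddD n) ℓ U k)).card
      = w := by
  classical
  have h1ℓ : 1 ≤ ℓ := hsol.len_pos
  have h2ℓ : (2:ℕ) ≤ 2 ^ ℓ := by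
    calc (2:ℕ) = 2 ^ 1 := by norm_num
      _ ≤ 2 ^ ℓ := Nat.pow_le_pow_right (by norm_num) h1ℓ
  set N := 2 ^ ℓ - 1 with hN
  have hNpos : 0 < N := by omega
  set φ := supportMap (oddD n) ℓ U with hφ
  set C := 2 ^ (n+1) - 3 with hC
  have hCpos : 1 ≤ C := by
    have : (2:ℕ) ^ 5 ≤ 2 ^ (n+1) := Nat.pow_le_pow_right (by norm_num) (by omega)
    simp only [hC]; omega
  set ε : ℕ → ℕ → ℕ := fun d k => (shift2 ℓ)^[k] (U d) / 2 ^ (ℓ - 1) with hε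
  set Δ : ℕ → ℕ := fun k => ∑ d ∈ oddD n, d * ε d k with hΔ
  set ee : ℕ → ℕ := fun k => ∑ d ∈ oddD n, ε d k with hee
  set T : ℕ → ℕ := fun k => ∑ d ∈ oddD n, d * (shift2 ℓ)^[k] (U d) with hT
  have hUlt : ∀ d, U d < 2 ^ ℓ := fun d => lt_of_le_of_lt (hsol.bounded d) (by omega)
  have hitlt : ∀ d k, (shift2 ℓ)^[k] (U d) < 2 ^ ℓ := fun d k => shift2_iter_lt h1ℓ (hUlt d) k
  have hεle : ∀ d k, ε d k ≤ 1 := by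
    intro d k
    have h := hitlt d k
    have h2 : (2:ℕ) ^ ℓ = 2 ^ (ℓ-1) * 2 := by
      rw [← pow_succ]; congr 1; omega
    have h3 : (shift2 ℓ)^[k] (U d) / 2 ^ (ℓ-1) < 2 := Nat.div_lt_of_lt_mul (by omega)
    simp only [hε]
    omega
  have hdD : ∀ d ∈ oddD n, 1 ≤ d ∧ d ≤ C := by
    intro d hd
    simp only [oddD, oddUpTo, Finset.mem_filter, Finset.mem_range] at hd
    constructor
    · omega
    · simp only [hC]; omega
  -- recurrence at level T
  have hrecT : ∀ k, T (k+1) + N * Δ k = 2 * T k := by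
    intro k
    simp only [hT, hΔ, hε, Finset.mul_sum, ← Finset.sum_add_distrib]
    rw [← Finset.mul_sum, Finset.mul_sum]
    apply Finset.sum_congr rfl
    intro d _
    have := shift2_rec h1ℓ (hitlt d k)
    calc d * (shift2 ℓ)^[k+1] (U d) + N * (d * ((shift2 ℓ)^[k] (U d) / 2 ^ (ℓ-1)))
        = d * ((shift2 ℓ)^[k+1] (U d) + N * ((shift2 ℓ)^[k] (U d) / 2 ^ (ℓ-1))) := by ring
      _ = d * (2 * (shift2 ℓ)^[k] (U d)) := by
          rw [Function.iterate_succ_apply', this]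
      _ = 2 * (d * (shift2 ℓ)^[k] (U d)) := by ring
  have hdvd : ∀ k, N ∣ T k := by
    intro k
    induction k with
    | zero => exact hsol.dvd
    | succ k ih =>
      have h2 : N ∣ 2 * T k := Dvd.dvd.mul_left ih 2
      rw [← hrecT k] at h2
      exact (Nat.dvd_add_right (Dvd.intro _ rfl)).mp (by rwa [Nat.add_comm] at h2)
  have hTpos : ∀ k, 0 < T k := by
    intro k
    obtain ⟨d, hd, hdpos⟩ : ∃ d ∈ oddD n, 0 < d * U d := by
      by_contra hcon
      push_neg at hcon
      have h0 : ∑ d ∈ oddD n, d * U d = 0 :=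
        Finset.sum_eq_zero (fun d hd => by have := hcon d hd; omega)
      have := hsol.pos
      omega
    have hd1 : 0 < d := by
      rcases Nat.eq_zero_or_pos d with h | h
      · rw [h] at hdpos; simp at hdpos
      · exact h
    have hU1 : 0 < U d := by
      rcases Nat.eq_zero_or_pos (U d) with h | h
      · rw [h] at hdpos; simp at hdpos
      · exact h
    have hpos : 0 < d * (shift2 ℓ)^[k] (U d) :=
      Nat.mul_pos hd1 (shift2_iter_pos h1ℓ (hUlt d) hU1 k)
    exact lt_of_lt_of_le hpos (Finset.single_le_sum (f := fun d => d * (shift2 ℓ)^[k] (U d))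
      (fun i _ => Nat.zero_le _) hd)
  have hφmul : ∀ k, φ k * N = T k := fun k => Nat.div_mul_cancel (hdvd k)
  have hφpos : ∀ k, 1 ≤ φ k := by
    intro k
    have h := hφmul k
    have := hTpos k
    rcases Nat.eq_zero_or_pos (φ k) with h0 | h0
    · rw [h0] at h; simp at h; omega
    · exact h0
  have hrec : ∀ k, φ (k+1) + Δ k = 2 * φ k := by
    intro k
    have : (φ (k+1) + Δ k) * N = (2 * φ k) * N := by
      calc (φ (k+1) + Δ k) * N = φ (k+1) * N + N * Δ k := by ring
        _ = T (k+1) + N * Δ k := by rw [hφmul]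
        _ = 2 * T k := hrecT k
        _ = 2 * (φ k * N) := by rw [hφmul]
        _ = (2 * φ k) * N := by ring
    exact Nat.eq_of_mul_eq_mul_right hNpos this
  have hper : φ ℓ = φ 0 := by
    have hs : ∑ d ∈ oddD n, d * (shift2 ℓ)^[ℓ] (U d) = ∑ d ∈ oddD n, d * (shift2 ℓ)^[0] (U d) :=
      Finset.sum_congr rfl (fun d _ => by
        rw [shift2_iter_id (hUlt d), Function.iterate_zero, id_eq])
    simp only [hφ, supportMap, hs]
  -- bit-count identities
  have hsumd : ∀ d, ∑ k ∈ Finset.range ℓ, ε d k = s2 (U d) := by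
    intro d
    have h1 : ∀ k ∈ Finset.range ℓ, ε d k = U d / 2 ^ (ℓ - 1 - k) % 2 := by
      intro k hk
      rw [Finset.mem_range] at hk
      simp only [hε]
      exact shift2_top hk (hUlt d)
    rw [Finset.sum_congr rfl h1, Finset.sum_range_reflect (fun i => U d / 2 ^ i % 2) ℓ]
    exact sum_bits ℓ (U d) (hUlt d)
  have hwsum : ∑ k ∈ Finset.range ℓ, ee k = w := by
    simp only [hee]
    rw [Finset.sum_comm]
    rw [Finset.sum_congr rfl (fun d _ => hsumd d)]
    exact hw
  have hΔee : ∀ k, Δ k ≤ C * ee k := by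
    intro k
    simp only [hΔ, hee, Finset.mul_sum]
    exact Finset.sum_le_sum (fun d hd => Nat.mul_le_mul_right _ (hdD d hd).2)
  have heeΔ : ∀ k, ee k ≤ Δ k := by
    intro k
    simp only [hΔ, hee]
    exact Finset.sum_le_sum (fun d hd => by
      calc ε d k = 1 * ε d k := by ring
        _ ≤ d * ε d k := Nat.mul_le_mul_right _ (hdD d hd).1)
  have hw1 : 1 ≤ w := by
    rcases Nat.eq_zero_or_pos w with h | h
    · rw [h] at hhigh; simp at hhigh; omega
    · exact h
  -- the jump set
  set J := (Finset.range ℓ).filter (fun k => φ (k + 1) < 2 * φ k) with hJ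
  set j := J.card with hj
  have hjump : ∀ k, (φ (k+1) < 2 * φ k) ↔ 0 < Δ k := by
    intro k
    have := hrec k
    omega
  have heJ : ∀ k ∈ J, 1 ≤ ee k := by
    intro k hk
    rw [hJ, Finset.mem_filter] at hk
    have h1 : 0 < Δ k := (hjump k).mp hk.2
    rcases Nat.eq_zero_or_pos (ee k) with h | h
    · exfalso
      have hz : Δ k = 0 := by
        simp only [hee] at h
        rw [Finset.sum_eq_zero_iff] at h
        simp only [hΔ]
        exact Finset.sum_eq_zero (fun d hd => by rw [h d hd, Nat.mul_zero])
      omega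
    · exact h
  have hjle : j ≤ w := by
    rw [hj, Finset.card_eq_sum_ones]
    calc ∑ _k ∈ J, 1 ≤ ∑ k ∈ J, ee k := Finset.sum_le_sum (fun k hk => heJ k hk)
      _ ≤ ∑ k ∈ Finset.range ℓ, ee k :=
          Finset.sum_le_sum_of_subset (by rw [hJ]; exact Finset.filter_subset _ _)
      _ = w := hwsum
  -- cyclic sum identities
  have hsums : ∑ k ∈ Finset.range ℓ, φ (k+1) = ∑ k ∈ Finset.range ℓ, φ k := by
    have a1 := Finset.sum_range_succ φ ℓ
    have a2 := Finset.sum_range_succ' φ ℓ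
    rw [hper] at a1
    omega
  have hsumΔ : ∑ k ∈ Finset.range ℓ, Δ k = ∑ k ∈ Finset.range ℓ, φ k := by
    have h1 : ∑ k ∈ Finset.range ℓ, (φ (k+1) + Δ k) = ∑ k ∈ Finset.range ℓ, 2 * φ k :=
      Finset.sum_congr rfl (fun k _ => hrec k)
    rw [Finset.sum_add_distrib, ← Finset.mul_sum] at h1
    omega
  have hsumφle : ∑ k ∈ Finset.range ℓ, φ k ≤ C * w := by
    rw [← hsumΔ]
    calc ∑ k ∈ Finset.range ℓ, Δ k ≤ ∑ k ∈ Finset.range ℓ, C * ee k :=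
        Finset.sum_le_sum (fun k _ => hΔee k)
      _ = C * ∑ k ∈ Finset.range ℓ, ee k := by rw [Finset.mul_sum]
      _ = C * w := by rw [hwsum]
  -- injectivity implies the values are distinct, bounding ℓ and w
  have hinj : Set.InjOn φ ↑(Finset.range ℓ) := hirr
  set A0 := (Finset.range ℓ).image φ with hA0
  have hA0card : A0.card = ℓ := by
    rw [hA0, Finset.card_image_of_injOn hinj, Finset.card_range]
  have hA0pos : ∀ a ∈ A0, 1 ≤ a := by
    intro a ha
    rw [hA0, Finset.mem_image] at ha
    obtain ⟨k, _, rfl⟩ := ha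
    exact hφpos k
  have hA0sum : ∑ a ∈ A0, a = ∑ k ∈ Finset.range ℓ, φ k := by
    rw [hA0]
    exact Finset.sum_image (fun x hx y hy hxy => hinj (by simpa using hx) (by simpa using hy) hxy)
  have hlsum : ℓ * (ℓ + 1) ≤ 2 * (C * w) := by
    calc ℓ * (ℓ + 1) ≤ 2 * ∑ a ∈ A0, a := sum_distinct_ge ℓ A0 hA0card hA0pos
      _ = 2 * ∑ k ∈ Finset.range ℓ, φ k := by rw [hA0sum]
      _ ≤ 2 * (C * w) := Nat.mul_le_mul_left _ hsumφle
  have hwle : w ≤ 2 ^ (n+1) := by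
    have h17 : 17 * w ≤ ℓ := by
      calc 17 * w ≤ (n - 1) * w := Nat.mul_le_mul_right _ (by omega)
        _ ≤ ℓ := hlow
    have hq : (17 * w) * (17 * w) ≤ ℓ * (ℓ + 1) :=
      Nat.mul_le_mul h17 (le_trans h17 (by omega))
    have hq2 : (289 * w) * w ≤ (2 * C) * w := by
      calc (289 * w) * w = (17 * w) * (17 * w) := by ring
        _ ≤ ℓ * (ℓ + 1) := hq
        _ ≤ 2 * (C * w) := hlsum
        _ = (2 * C) * w := by ring
    have hq3 : 289 * w ≤ 2 * C := Nat.le_of_mul_le_mul_right hq2 hw1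
    have hCle : C ≤ 2 ^ (n+1) := by simp only [hC]; omega
    omega
  -- conclude, unless j < w
  rcases Nat.lt_or_ge j w with hcon | hge
  swap
  · omega
  exfalso
  -- successor map is injective on J
  have hJsub : J ⊆ Finset.range ℓ := by rw [hJ]; exact Finset.filter_subset _ _
  have hφsucc : ∀ k, k < ℓ → φ (k+1) = φ ((k+1) % ℓ) := by
    intro k hk
    by_cases h : k + 1 = ℓ
    · rw [h, Nat.mod_self, hper]
    · rw [Nat.mod_eq_of_lt (by omega)]
  have hmodlt : ∀ k, (k+1) % ℓ < ℓ := fun k => Nat.mod_lt _ (by omega)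
  have hψinj : ∀ k1 ∈ J, ∀ k2 ∈ J, φ ((k1+1) % ℓ) = φ ((k2+1) % ℓ) → k1 = k2 := by
    intro k1 h1 k2 h2 heq
    have hk1 : k1 < ℓ := Finset.mem_range.mp (hJsub h1)
    have hk2 : k2 < ℓ := Finset.mem_range.mp (hJsub h2)
    have hmeq : (k1+1) % ℓ = (k2+1) % ℓ :=
      hinj (by simp [hmodlt k1]) (by simp [hmodlt k2]) heq
    have e1 : (k1+1) % ℓ = if k1+1 = ℓ then 0 else k1+1 := by
      by_cases h : k1+1 = ℓ
      · rw [if_pos h, h, Nat.mod_self]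
      · rw [if_neg h, Nat.mod_eq_of_lt (by omega)]
    have e2 : (k2+1) % ℓ = if k2+1 = ℓ then 0 else k2+1 := by
      by_cases h : k2+1 = ℓ
      · rw [if_pos h, h, Nat.mod_self]
      · rw [if_neg h, Nat.mod_eq_of_lt (by omega)]
    rw [e1, e2] at hmeq
    by_cases ha : k1+1 = ℓ <;> by_cases hb : k2+1 = ℓ <;>
      simp [ha, hb] at hmeq <;> omega
  set A := J.image (fun k => φ ((k+1) % ℓ)) with hA
  have hAinj : Set.InjOn (fun k => φ ((k+1) % ℓ)) ↑J := by
    intro x hx y hy hxy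
    exact hψinj x (Finset.mem_coe.mp hx) y (Finset.mem_coe.mp hy) hxy
  have hAcard : A.card = j := by rw [hA, Finset.card_image_of_injOn hAinj]
  have hApos : ∀ a ∈ A, 1 ≤ a := by
    intro a ha
    rw [hA, Finset.mem_image] at ha
    obtain ⟨k, _, rfl⟩ := ha
    exact hφpos _
  have hAprodC : ∏ a ∈ A, (a + C) = ∏ k ∈ J, (φ (k+1) + C) := by
    rw [hA, Finset.prod_image (fun x hx y hy hxy => hψinj x hx y hy hxy)]
    exact Finset.prod_congr rfl (fun k hk => by
      rw [← hφsucc k (Finset.mem_range.mp (hJsub hk))])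
  have hAprod : ∏ a ∈ A, a = ∏ k ∈ J, φ (k+1) := by
    rw [hA, Finset.prod_image (fun x hx y hy hxy => hψinj x hx y hy hxy)]
    exact Finset.prod_congr rfl (fun k hk => by
      rw [← hφsucc k (Finset.mem_range.mp (hJsub hk))])
  -- key product identity
  have P1 : ∏ k ∈ Finset.range ℓ, (φ (k+1) + Δ k) = 2^ℓ * ∏ k ∈ Finset.range ℓ, φ k := by
    rw [Finset.prod_congr rfl (fun k (_ : k ∈ Finset.range ℓ) => hrec k),
      Finset.prod_mul_distrib, Finset.prod_const, Finset.card_range]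
  have P3 : ∏ k ∈ Finset.range ℓ, φ (k+1) = ∏ k ∈ Finset.range ℓ, φ k := by
    have a1 := Finset.prod_range_succ φ ℓ
    have a2 := Finset.prod_range_succ' φ ℓ
    rw [hper] at a1
    have := a1.symm.trans a2
    exact (Nat.eq_of_mul_eq_mul_right (hφpos 0) this.symm)
  have Psplit1 := Finset.prod_filter_mul_prod_filter_not (Finset.range ℓ)
    (fun k => φ (k+1) < 2 * φ k) (fun k => φ (k+1) + Δ k)
  have Psplit2 := Finset.prod_filter_mul_prod_filter_not (Finset.range ℓ)
    (fun k => φ (k+1) < 2 * φ k) (fun k => φ (k+1))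
  have hnotJ : ∏ k ∈ (Finset.range ℓ).filter (fun k => ¬ (φ (k+1) < 2 * φ k)),
      (φ (k+1) + Δ k) = ∏ k ∈ (Finset.range ℓ).filter (fun k => ¬ (φ (k+1) < 2 * φ k)),
      φ (k+1) := by
    apply Finset.prod_congr rfl
    intro k hk
    rw [Finset.mem_filter] at hk
    have h2 := (hjump k)
    have : Δ k = 0 := by
      rcases Nat.eq_zero_or_pos (Δ k) with h | h
      · exact h
      · exact absurd ((hjump k).mpr h) hk.2
    omega
  set Q := ∏ k ∈ (Finset.range ℓ).filter (fun k => ¬ (φ (k+1) < 2 * φ k)), φ (k+1) with hQ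
  have hQpos : 1 ≤ Q := Finset.one_le_prod' (fun k _ => hφpos _)
  have hkey : (∏ k ∈ J, (φ (k+1) + Δ k)) = 2^ℓ * ∏ k ∈ J, φ (k+1) := by
    have c1 : (∏ k ∈ J, (φ (k+1) + Δ k)) * Q = (2^ℓ * ∏ k ∈ J, φ (k+1)) * Q := by
      calc (∏ k ∈ J, (φ (k+1) + Δ k)) * Q
          = ∏ k ∈ Finset.range ℓ, (φ (k+1) + Δ k) := by rw [← Psplit1, hnotJ]
        _ = 2^ℓ * ∏ k ∈ Finset.range ℓ, φ k := P1
        _ = 2^ℓ * ∏ k ∈ Finset.range ℓ, φ (k+1) := by rw [P3]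
        _ = 2^ℓ * ((∏ k ∈ J, φ (k+1)) * Q) := by rw [← Psplit2]
        _ = (2^ℓ * ∏ k ∈ J, φ (k+1)) * Q := by ring
    exact Nat.eq_of_mul_eq_mul_right hQpos c1
  -- bound the product over jumps
  set s := ∑ k ∈ J, (ee k - 1) with hsdef
  have hsj : s + j ≤ w := by
    have c1 : ∑ k ∈ J, ee k = s + j := by
      rw [hsdef, hj, Finset.card_eq_sum_ones, ← Finset.sum_add_distrib]
      apply Finset.sum_congr rfl
      intro k hk
      have := heJ k hk
      omega
    have c2 : ∑ k ∈ J, ee k ≤ w := by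
      rw [← hwsum]
      exact Finset.sum_le_sum_of_subset hJsub
    omega
  have hB1 : ∏ k ∈ J, (φ (k+1) + Δ k) ≤ 2^s * ∏ k ∈ J, (φ (k+1) + C) := by
    calc ∏ k ∈ J, (φ (k+1) + Δ k)
        ≤ ∏ k ∈ J, (2^(ee k - 1) * (φ (k+1) + C)) := by
          apply Finset.prod_le_prod' 
          intro k hk
          have he1 : 1 ≤ ee k := heJ k hk
          have h2e : ee k ≤ 2^(ee k - 1) := by
            have := Nat.lt_two_pow_self (n := ee k - 1)
            omega
          have c1 : C * ee k ≤ C * 2^(ee k - 1) := Nat.mul_le_mul_left _ h2e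
          have c2 : φ (k+1) ≤ 2^(ee k - 1) * φ (k+1) :=
            Nat.le_mul_of_pos_left _ (Nat.two_pow_pos _)
          calc φ (k+1) + Δ k ≤ φ (k+1) + C * ee k := by have := hΔee k; omega
            _ ≤ 2^(ee k - 1) * φ (k+1) + 2^(ee k - 1) * C := by
                have c3 : C * 2^(ee k - 1) = 2^(ee k - 1) * C := by ring
                omega
            _ = 2^(ee k - 1) * (φ (k+1) + C) := by ring
      _ = (∏ k ∈ J, 2^(ee k - 1)) * ∏ k ∈ J, (φ (k+1) + C) := Finset.prod_mul_distrib
      _ = 2^s * ∏ k ∈ J, (φ (k+1) + C) := by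
          rw [hsdef, Finset.prod_pow_eq_pow_sum]
  have hB5 := prod_add_le C j A hAcard hApos
  have hB6 : ∏ i ∈ Finset.range j, (C + i + 1) ≤ 2 ^ ((n+2)*j) := by
    have hpow : (2:ℕ) ^ (n+2) = 2 * 2^(n+1) := by ring
    calc ∏ i ∈ Finset.range j, (C + i + 1) ≤ ∏ _i ∈ Finset.range j, 2^(n+2) := by
          apply Finset.prod_le_prod'
          intro i hi
          have : i < j := Finset.mem_range.mp hi
          simp only [hC]
          omega
      _ = (2^(n+2))^j := by rw [Finset.prod_const, Finset.card_range]
      _ = 2^((n+2)*j) := by rw [← pow_mul]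
  -- put everything together
  set P := ∏ k ∈ J, φ (k+1) with hP
  have hPpos : 1 ≤ P := Finset.one_le_prod' (fun k _ => hφpos _)
  have hfin1 : (2^ℓ * Nat.factorial j) * P ≤ (2^s * 2^((n+2)*j)) * P := by
    calc (2^ℓ * Nat.factorial j) * P = (2^ℓ * P) * Nat.factorial j := by ring
      _ = (∏ k ∈ J, (φ (k+1) + Δ k)) * Nat.factorial j := by rw [hkey]
      _ ≤ (2^s * ∏ k ∈ J, (φ (k+1) + C)) * Nat.factorial j :=
          Nat.mul_le_mul_right _ hB1
      _ = 2^s * ((∏ a ∈ A, (a + C)) * Nat.factorial j) := by rw [hAprodC]; ring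
      _ ≤ 2^s * ((∏ a ∈ A, a) * ∏ i ∈ Finset.range j, (C + i + 1)) :=
          Nat.mul_le_mul_left _ hB5
      _ = 2^s * (P * ∏ i ∈ Finset.range j, (C + i + 1)) := by rw [hAprod]
      _ ≤ 2^s * (P * 2^((n+2)*j)) := by
          exact Nat.mul_le_mul_left _ (Nat.mul_le_mul_left _ hB6)
      _ = (2^s * 2^((n+2)*j)) * P := by ring
  have hfin2 : 2^ℓ * Nat.factorial j ≤ 2^(s + (n+2)*j) := by
    have := Nat.le_of_mul_le_mul_right hfin1 hPpos
    rw [pow_add]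
    exact this
  have hfin3 : 2^(ℓ + 3*j) ≤ 2^(9 + s + (n+2)*j) := by
    calc 2^(ℓ + 3*j) = 2^ℓ * 8^j := by
          rw [pow_add, pow_mul]; norm_num
      _ ≤ 2^ℓ * (512 * Nat.factorial j) := Nat.mul_le_mul_left _ (eight_pow_le j)
      _ = 512 * (2^ℓ * Nat.factorial j) := by ring
      _ ≤ 512 * 2^(s + (n+2)*j) := Nat.mul_le_mul_left _ hfin2
      _ = 2^(9 + s + (n+2)*j) := by
          have hps : (2:ℕ)^(9 + s + (n+2)*j) = 2^9 * (2^s * 2^((n+2)*j)) := by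
            rw [pow_add, pow_add, Nat.mul_assoc]
          rw [hps, pow_add]
          norm_num
  have hexp : ℓ + 3*j ≤ 9 + s + (n+2)*j :=
    (Nat.pow_le_pow_iff_right (by norm_num : 1 < 2)).mp hfin3
  -- final arithmetic contradiction
  have e3 : (n+2)*j = n*j + 2*j := by ring
  have e4 : n*j + n*(w-j) = n*w := by
    rw [← Nat.mul_add]
    congr 1
    omega
  have e5 : (n-1)*w + w = n*w := by
    obtain ⟨m, rfl⟩ : ∃ m, n = m + 1 := ⟨n - 1, by omega⟩
    simp [Nat.add_mul]
  have e6 : 18*(w-j) ≤ n*(w-j) := Nat.mul_le_mul_right _ hn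
  rw [e3] at hexp
  omega
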